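/- In a laminar assignment problem with integer quotas, the serial dictatorship with dynamic menus algorithm never partially assigns any student (i.e., at every assignment step, for each type t and school s, f(t,s) is either 0 or at least 1), and hence it outputs an integral assignment feasible with respect to the original quotas q with Δ ≡ 0. -/

import Mathlib

namespace SD14
open Finset

/-- A real number is an integer. -/
def IsInt (r : ℝ) : Prop := ∃ n : ℤ, (n : ℝ) = r

lemma isInt_intCast (n : ℤ) : IsInt (n : ℝ) := ⟨n, rfl⟩

lemma isInt_zero : IsInt (0 : ℝ) := ⟨0, by norm_num⟩

lemma IsInt.add {a b : ℝ} (ha : IsInt a) (hb : IsInt b) : IsInt (a + b) := by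
  obtain ⟨m, rfl⟩ := ha; obtain ⟨n, rfl⟩ := hb; exact ⟨m + n, by push_cast; ring⟩

lemma IsInt.neg {a : ℝ} (ha : IsInt a) : IsInt (-a) := by
  obtain ⟨m, rfl⟩ := ha; exact ⟨-m, by push_cast; ring⟩

lemma IsInt.sub {a b : ℝ} (ha : IsInt a) (hb : IsInt b) : IsInt (a - b) := by
  simpa [sub_eq_add_neg] using ha.add hb.neg

lemma isInt_sum {ι : Type*} {s : Finset ι} {f : ι → ℝ} (h : ∀ i ∈ s, IsInt (f i)) :
    IsInt (∑ i ∈ s, f i) := by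
  classical
  induction s using Finset.induction_on with
  | empty => simpa using isInt_zero
  | insert _ _ hx ih =>
      rw [Finset.sum_insert hx]
      exact (h _ (Finset.mem_insert_self _ _)).add
        (ih fun i hi => h i (Finset.mem_insert_of_mem hi))

lemma floor_lt_of_not_isInt {v : ℝ} (hv : ¬ IsInt v) : (⌊v⌋ : ℝ) < v := by
  rcases lt_or_eq_of_le (Int.floor_le v) with h | h
  · exact h
  · exact absurd ⟨⌊v⌋, h⟩ hv

lemma lt_ceil_of_not_isInt {v : ℝ} (hv : ¬ IsInt v) : v < (⌈v⌉ : ℝ) := by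
  rcases lt_or_eq_of_le (Int.le_ceil v) with h | h
  · exact h
  · exact absurd ⟨⌈v⌉, h.symm⟩ hv

/-- The largest step we can move `v` in direction `δ` before hitting an integer. -/
noncomputable def step (v δ : ℝ) : ℝ :=
  if 0 < δ then ((⌈v⌉ : ℝ) - v) / δ else ((⌊v⌋ : ℝ) - v) / δ

lemma step_pos {v δ : ℝ} (hv : ¬ IsInt v) (hδ : δ ≠ 0) : 0 < step v δ := by
  unfold step
  rcases lt_or_gt_of_ne hδ with h | h
  · rw [if_neg (by linarith)]
    exact div_pos_of_neg_of_neg (by linarith [floor_lt_of_not_isInt hv]) h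
  · rw [if_pos h]
    exact div_pos (by linarith [lt_ceil_of_not_isInt hv]) h

lemma move_mem {v δ ε : ℝ} (hv : ¬ IsInt v) (hδ : δ ≠ 0) (hε : 0 ≤ ε)
    (hεs : ε ≤ step v δ) : (⌊v⌋ : ℝ) ≤ v + ε * δ ∧ v + ε * δ ≤ (⌈v⌉ : ℝ) := by
  unfold step at hεs
  rcases lt_or_gt_of_ne hδ with h | h
  · rw [if_neg (by linarith)] at hεs
    have h1 : ε * δ ≥ ((⌊v⌋ : ℝ) - v) := by
      have := mul_le_mul_of_nonpos_right hεs (le_of_lt h)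
      rwa [div_mul_cancel₀ _ hδ] at this
    have h2 : ε * δ ≤ 0 := mul_nonpos_of_nonneg_of_nonpos hε (le_of_lt h)
    constructor <;> [linarith; linarith [Int.le_ceil v]]
  · rw [if_pos h] at hεs
    have h1 : ε * δ ≤ ((⌈v⌉ : ℝ) - v) := by
      have := mul_le_mul_of_nonneg_right hεs (le_of_lt h)
      rwa [div_mul_cancel₀ _ hδ] at this
    have h2 : 0 ≤ ε * δ := mul_nonneg hε (le_of_lt h)
    constructor <;> [linarith [Int.floor_le v]; linarith]

lemma move_hits {v δ : ℝ} (hδ : δ ≠ 0) : IsInt (v + step v δ * δ) := by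
  unfold step
  split
  · exact ⟨⌈v⌉, by field_simp; ring⟩
  · exact ⟨⌊v⌋, by field_simp; ring⟩


variable {T M : Type} [Fintype T] [Fintype M] [DecidableEq T] [DecidableEq M]

lemma attach_filter_sum {α β : Type*} [AddCommMonoid β] (F : Finset α)
    (P : α → Prop) [DecidablePred P] (f : α → β) :
    ∑ e ∈ F.attach.filter (fun e => P e.1), f e.1 = ∑ e ∈ F.filter P, f e := by
  rw [Finset.sum_filter, Finset.sum_attach F (fun e => if P e then f e else 0),
    ← Finset.sum_filter]

set_option maxHeartbeats 1000000 in
lemma exists_kernel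
    (F : Finset (T × M)) (hF : F.Nonempty)
    (key : T × M → Option (M × Finset T))
    (hkeyF : ∀ e n, key e = some n → e ∈ F)
    (hrow2 : ∀ t ∈ F.image Prod.fst, 2 ≤ (F.filter fun e => e.1 = t).card)
    (hcol2 : ∀ n ∈ F.biUnion (fun e => (key e).toFinset),
        2 ≤ (F.filter fun e => key e = some n).card) :
    ∃ D : T × M → ℝ, (∃ e, D e ≠ 0) ∧ (∀ e, e ∉ F → D e = 0) ∧
      (∀ t, ∑ e ∈ F.filter (fun e => e.1 = t), D e = 0) ∧
      (∀ n, ∑ e ∈ F.filter (fun e => key e = some n), D e = 0) := by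
  classical
  obtain ⟨e0, he0⟩ := hF
  let dflt : M × Finset T := (e0.2, ∅)
  let rowNodes : Finset T := F.image Prod.fst
  let colNodes : Finset (M × Finset T) := F.biUnion (fun e => (key e).toFinset)
  let I : Finset (T ⊕ (M × Finset T)) := rowNodes.disjSum colNodes
  let pred : (T ⊕ (M × Finset T)) → (T × M) → Prop :=
    fun i e => Sum.elim (fun t => e.1 = t) (fun n => key e = some n) i
  have hpredinl : ∀ t e, pred (Sum.inl t) e ↔ e.1 = t := fun _ _ => Iff.rfl
  have hpredinr : ∀ n e, pred (Sum.inr n) e ↔ key e = some n := fun _ _ => Iff.rfl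
  let L : ((↥F) → ℝ) →ₗ[ℝ] ((↥I) → ℝ) :=
    { toFun := fun d j => ∑ e ∈ F.attach.filter (fun e => pred j.1 e.1), d e
      map_add' := by
        intro d1 d2; funext j; simp [Finset.sum_add_distrib]
      map_smul' := by
        intro a d; funext j; simp [Finset.mul_sum] }
  -- fiber counting
  have hfib_row : F.card = ∑ t ∈ rowNodes, (F.filter fun e => e.1 = t).card :=
    Finset.card_eq_sum_card_fiberwise (fun e he => Finset.mem_image_of_mem _ he)
  have h2r : 2 * rowNodes.card ≤ F.card := by
    rw [hfib_row]
    calc 2 * rowNodes.card = ∑ _t ∈ rowNodes, 2 := by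
          rw [Finset.sum_const, smul_eq_mul, mul_comm]
      _ ≤ _ := Finset.sum_le_sum (fun t ht => hrow2 t ht)
  let Fc : Finset (T × M) := F.filter (fun e => (key e).isSome)
  have hmemcol : ∀ e ∈ F, ∀ n, key e = some n → n ∈ colNodes := by
    intro e he n hn
    exact Finset.mem_biUnion.mpr ⟨e, he, by simp [hn]⟩
  have hfibm : ∀ n, Fc.filter (fun e => (key e).getD dflt = n)
      = F.filter (fun e => key e = some n) := by
    intro n
    ext e
    simp only [Fc, Finset.mem_filter, Finset.filter_filter]
    constructor
    · rintro ⟨he, hs, hg⟩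
      obtain ⟨m, hm⟩ := Option.isSome_iff_exists.mp hs
      rw [hm] at hg; simp only [Option.getD_some] at hg
      exact ⟨he, by rw [hm, hg]⟩
    · rintro ⟨he, hk⟩
      exact ⟨he, by simp [hk], by simp [hk]⟩
  have hfib_col : Fc.card = ∑ n ∈ colNodes, (F.filter fun e => key e = some n).card := by
    rw [Finset.card_eq_sum_card_fiberwise (t := colNodes)
      (f := fun e => (key e).getD dflt)]
    · exact Finset.sum_congr rfl (fun n hn => by rw [hfibm n])
    · intro e he
      rw [Finset.mem_coe, Finset.mem_filter] at he
      obtain ⟨m, hm⟩ := Option.isSome_iff_exists.mp he.2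
      have := hmemcol e he.1 m hm
      simpa [hm] using this
  have h2k : 2 * colNodes.card ≤ Fc.card := by
    rw [hfib_col]
    calc 2 * colNodes.card = ∑ _n ∈ colNodes, 2 := by
          rw [Finset.sum_const, smul_eq_mul, mul_comm]
      _ ≤ _ := Finset.sum_le_sum (fun n hn => hcol2 n hn)
  have hFcF : Fc.card ≤ F.card := Finset.card_le_card (Finset.filter_subset _ _)
  have hIcard : Fintype.card ↥I = rowNodes.card + colNodes.card := by
    rw [Fintype.card_coe]; exact Finset.card_disjSum _ _
  have hVcard : Module.finrank ℝ ((↥F) → ℝ) = F.card := by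
    rw [Module.finrank_fintype_fun_eq_card, Fintype.card_coe]
  have hW : ∃ W : Submodule ℝ ((↥I) → ℝ), LinearMap.range L ≤ W ∧
      Module.finrank ℝ ↥W < F.card := by
    by_cases hm : rowNodes.card + colNodes.card < F.card
    · refine ⟨⊤, le_top, ?_⟩
      rw [finrank_top, Module.finrank_fintype_fun_eq_card, hIcard]
      exact hm
    · push_neg at hm
      have hFcall : Fc = F := by
        apply Finset.eq_of_subset_of_card_le (Finset.filter_subset _ _)
        have hkey2 : F.card + F.card ≤ F.card + Fc.card := by
          calc F.card + F.card = 2 * F.card := (two_mul _).symm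
            _ ≤ 2 * (rowNodes.card + colNodes.card) := Nat.mul_le_mul_left 2 hm
            _ = 2 * rowNodes.card + 2 * colNodes.card := by ring
            _ ≤ F.card + Fc.card := add_le_add h2r h2k
        exact le_of_add_le_add_left hkey2
      have hsome : ∀ e ∈ F, (key e).isSome := by
        intro e he
        have : e ∈ Fc := hFcall ▸ he
        rw [Finset.mem_filter] at this
        exact this.2
      let w : (T ⊕ (M × Finset T)) → ℝ := Sum.elim (fun _ => 1) (fun _ => -1)
      let g : ((↥I) → ℝ) →ₗ[ℝ] ℝ :=
        { toFun := fun y => ∑ j : ↥I, w j.1 * y j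
          map_add' := by intro y1 y2; simp [mul_add, Finset.sum_add_distrib]
          map_smul' := by
            intro a y; simp [Finset.mul_sum]; congr 1; funext j; ring }
      have hrange : LinearMap.range L ≤ LinearMap.ker g := by
        rintro _ ⟨d, rfl⟩
        rw [LinearMap.mem_ker]
        show (∑ j : ↥I, w j.1 * ∑ e ∈ F.attach.filter (fun e => pred j.1 e.1), d e) = 0
        rw [Finset.sum_coe_sort I
          (fun i => w i * ∑ e ∈ F.attach.filter (fun e => pred i e.1), d e)]
        rw [Finset.sum_disjSum]
        have hrowsum : ∑ i ∈ rowNodes,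
            (w (Sum.inl i) * ∑ e ∈ F.attach.filter (fun e => pred (Sum.inl i) e.1), d e)
            = ∑ e ∈ F.attach, d e := by
          simp only [w, Sum.elim_inl, one_mul]
          have hstep : ∀ i ∈ rowNodes,
              (F.attach.filter (fun e => pred (Sum.inl i) e.1))
                = F.attach.filter (fun e => e.1.1 = i) := by
            intro i _
            apply Finset.filter_congr
            intro e _
            rw [hpredinl]
          rw [Finset.sum_congr rfl (fun i hi => by rw [hstep i hi])]
          exact Finset.sum_fiberwise_of_maps_to (g := fun e : ↥F => e.1.1)
            (fun e _ => Finset.mem_image_of_mem _ e.2) d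
        have hcolsum : ∑ i ∈ colNodes,
            (w (Sum.inr i) * ∑ e ∈ F.attach.filter (fun e => pred (Sum.inr i) e.1), d e)
            = -∑ e ∈ F.attach, d e := by
          simp only [w, Sum.elim_inr, neg_one_mul, Finset.sum_neg_distrib, neg_inj]
          have hstep : ∀ i ∈ colNodes,
              (F.attach.filter (fun e => pred (Sum.inr i) e.1))
                = F.attach.filter (fun e => (key e.1).getD dflt = i) := by
            intro i _
            apply Finset.filter_congr
            intro e _
            rw [hpredinr]
            obtain ⟨m, hm⟩ := Option.isSome_iff_exists.mp (hsome e.1 e.2)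
            simp [hm]
          rw [Finset.sum_congr rfl (fun i hi => by rw [hstep i hi])]
          refine Finset.sum_fiberwise_of_maps_to (g := fun e : ↥F => (key e.1).getD dflt)
            ?_ d
          intro e _
          obtain ⟨m, hm⟩ := Option.isSome_iff_exists.mp (hsome e.1 e.2)
          have := hmemcol e.1 e.2 m hm
          simpa [hm] using this
        rw [hrowsum, hcolsum]; ring
      refine ⟨LinearMap.ker g, hrange, ?_⟩
      have hgapp : ∀ y, g y = ∑ j : ↥I, w j.1 * y j := fun _ => rfl
      have hgne : LinearMap.ker g ≠ ⊤ := by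
        have ht0 : (Sum.inl e0.1 : T ⊕ (M × Finset T)) ∈ I :=
          Finset.inl_mem_disjSum.mpr (Finset.mem_image_of_mem _ he0)
        set j0 : ↥I := ⟨Sum.inl e0.1, ht0⟩ with hj0
        set y0 : ↥I → ℝ := fun j => if j = j0 then 1 else 0 with hy0
        intro htop
        have h0 : g y0 = 0 := by
          rw [← LinearMap.mem_ker, htop]; trivial
        have h1 : g y0 = 1 := by
          rw [hgapp]
          rw [Finset.sum_eq_single j0]
          · simp [hy0, w, hj0]
          · intro j _ hj
            simp [hy0, hj]
          · intro h; exact absurd (Finset.mem_univ _) h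
        rw [h0] at h1; norm_num at h1
      calc Module.finrank ℝ ↥(LinearMap.ker g)
          < Module.finrank ℝ ((↥I) → ℝ) := Submodule.finrank_lt hgne
        _ = rowNodes.card + colNodes.card := by
            rw [Module.finrank_fintype_fun_eq_card, hIcard]
        _ ≤ F.card := by
            have hkey2 : 2 * (rowNodes.card + colNodes.card) ≤ 2 * F.card := by
              calc 2 * (rowNodes.card + colNodes.card)
                  = 2 * rowNodes.card + 2 * colNodes.card := by ring
                _ ≤ F.card + Fc.card := add_le_add h2r h2k
                _ ≤ F.card + F.card := by exact Nat.add_le_add_left hFcF _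
                _ = 2 * F.card := (two_mul _).symm
            exact Nat.le_of_mul_le_mul_left hkey2 (by norm_num)
  obtain ⟨W, hrange, hWlt⟩ := hW
  have hker : LinearMap.ker L ≠ ⊥ := by
    intro hbot
    have hinj : Function.Injective L := LinearMap.ker_eq_bot.mp hbot
    have h1 : Module.finrank ℝ ↥(LinearMap.range L) = F.card := by
      rw [LinearMap.finrank_range_of_inj hinj, hVcard]
    have h2 : Module.finrank ℝ ↥(LinearMap.range L) ≤ Module.finrank ℝ ↥W :=
      Submodule.finrank_mono hrange
    omega
  obtain ⟨d, hd, hdne⟩ := Submodule.exists_mem_ne_zero_of_ne_bot hker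
  let D : T × M → ℝ := fun e => if h : e ∈ F then d ⟨e, h⟩ else 0
  have hDval : ∀ e : ↥F, D e.1 = d e := by
    intro e
    show (if h : e.1 ∈ F then d ⟨e.1, h⟩ else 0) = d e
    rw [dif_pos e.2]
  have hLzero : ∀ i, ∀ hi : i ∈ I, ∑ e ∈ F.attach.filter (fun e => pred i e.1), d e = 0 :=
    fun i hi => congrFun (LinearMap.mem_ker.mp hd) ⟨i, hi⟩
  have hconv : ∀ (P : T × M → Prop) (_ : DecidablePred P),
      ∑ e ∈ F.attach.filter (fun e => P e.1), d e = ∑ e ∈ F.filter P, D e := by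
    intro P hP
    rw [show (∑ e ∈ F.attach.filter (fun e => P e.1), d e)
        = ∑ e ∈ F.attach.filter (fun e => P e.1), D e.1 from
      Finset.sum_congr rfl (fun e _ => (hDval e).symm)]
    exact attach_filter_sum F P D
  refine ⟨D, ?_, ?_, ?_, ?_⟩
  · have : ∃ e : ↥F, d e ≠ 0 := by
      by_contra h; push_neg at h
      exact hdne (funext fun e => h e)
    obtain ⟨e, he⟩ := this
    exact ⟨e.1, by rw [hDval e]; exact he⟩
  · intro e he
    show (if h : e ∈ F then d ⟨e, h⟩ else 0) = 0
    rw [dif_neg he]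
  · intro t
    by_cases ht : t ∈ rowNodes
    · have := hLzero (Sum.inl t) (Finset.inl_mem_disjSum.mpr ht)
      rw [← hconv (fun e => e.1 = t) inferInstance]
      rw [← this]
      refine Finset.sum_congr ?_ (fun _ _ => rfl)
      apply Finset.filter_congr
      intro e _
      rw [hpredinl]
    · have : F.filter (fun e => e.1 = t) = ∅ := by
        rw [Finset.filter_eq_empty_iff]
        intro e he heq
        exact ht (heq ▸ Finset.mem_image_of_mem _ he)
      rw [this, Finset.sum_empty]
  · intro n
    by_cases hn : n ∈ colNodes
    · have := hLzero (Sum.inr n) (Finset.inr_mem_disjSum.mpr hn)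
      rw [← hconv (fun e => key e = some n) inferInstance]
      rw [← this]
      refine Finset.sum_congr ?_ (fun _ _ => rfl)
      apply Finset.filter_congr
      intro e _
      rw [hpredinr]
    · have : F.filter (fun e => key e = some n) = ∅ := by
        rw [Finset.filter_eq_empty_iff]
        intro e he heq
        exact hn (hmemcol e he n heq)
      rw [this, Finset.sum_empty]

open Finset in
/-- Feasibility for the original fractional assignment LP (LP1). -/
def LP1Feas' {T M : Type} [Fintype T] [Fintype M]
    (Z : M → Finset (Finset T)) (qlo qhi : M → Finset T → ℝ)
    (C : T → ℝ) (x : T → M → ℝ) : Prop :=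
  (∀ t s, 0 ≤ x t s) ∧
  (∀ s, ∀ R ∈ Z s, ∑ t ∈ R, x t s ≤ qhi s R) ∧
  (∀ s, ∀ R ∈ Z s, qlo s R ≤ ∑ t ∈ R, x t s) ∧
  (∀ t, ∑ s, x t s = C t)

/-- linear objective -/
def objv (c x : T → M → ℝ) : ℝ := ∑ t, ∑ s, c t s * x t s

open scoped Classical in
/-- all fractional entries and fractional constraint sums -/
noncomputable def fracSet (Z : M → Finset (Finset T)) (x : T → M → ℝ) :
    Finset ((T × M) ⊕ (M × Finset T)) :=
  (Finset.univ.filter fun e : T × M => ¬ IsInt (x e.1 e.2)).disjSum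
    ((Finset.univ.biUnion fun s : M => (Z s).image fun R => (s, R)).filter
      fun p => ¬ IsInt (∑ t ∈ p.2, x t p.1))

lemma sum_filter_prod {α : Type*} [AddCommMonoid α] (s : M) (R : Finset T)
    (A : Finset (T × M)) (φ : T × M → α) :
    ∑ e ∈ A.filter (fun e => e.2 = s ∧ e.1 ∈ R), φ e
      = ∑ t ∈ R.filter (fun t => (t, s) ∈ A), φ (t, s) := by
  classical
  refine Finset.sum_nbij' (fun e => e.1) (fun t => (t, s)) ?_ ?_ ?_ ?_ ?_
  · intro e he
    rw [Finset.mem_filter] at he ⊢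
    obtain ⟨hA, h2, h1⟩ := he
    refine ⟨h1, ?_⟩
    have : (e.1, s) = e := by rw [← h2]
    rw [this]; exact hA
  · intro a ha
    rw [Finset.mem_filter] at ha ⊢
    exact ⟨ha.2, rfl, ha.1⟩
  · intro e he
    rw [Finset.mem_filter] at he
    exact Prod.ext rfl he.2.1.symm
  · intro a _; rfl
  · intro e he
    rw [Finset.mem_filter] at he
    rw [show (e.1, s) = e from Prod.ext rfl he.2.1.symm]

lemma row_reindex {α : Type*} [AddCommMonoid α] (t : T) (A : Finset (T × M)) (φ : T × M → α) :
    ∑ e ∈ A.filter (fun e => e.1 = t), φ e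
      = ∑ s ∈ Finset.univ.filter (fun s => (t, s) ∈ A), φ (t, s) := by
  classical
  refine Finset.sum_nbij' (fun e => e.2) (fun s => (t, s)) ?_ ?_ ?_ ?_ ?_
  · intro e he
    rw [Finset.mem_filter] at he ⊢
    refine ⟨Finset.mem_univ _, ?_⟩
    rw [show (t, e.2) = e from Prod.ext he.2.symm rfl]
    exact he.1
  · intro a ha
    rw [Finset.mem_filter] at ha ⊢
    exact ⟨ha.2, rfl⟩
  · intro e he
    rw [Finset.mem_filter] at he
    exact Prod.ext he.2.symm rfl
  · intro a _; rfl
  · intro e he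
    rw [Finset.mem_filter] at he
    rw [show (t, e.2) = e from Prod.ext he.2.symm rfl]

set_option maxHeartbeats 2000000 in
open scoped Classical in
theorem step_lemma
    (Z : M → Finset (Finset T)) (qlo qhi : M → Finset T → ℤ) (C : T → ℤ)
    (hlam : ∀ s, ∀ R ∈ Z s, ∀ R' ∈ Z s, R ⊆ R' ∨ R' ⊆ R ∨ Disjoint R R')
    (c : T → M → ℝ) {x : T → M → ℝ}
    (hx : LP1Feas' Z (fun s R => (qlo s R : ℝ)) (fun s R => (qhi s R : ℝ))
      (fun t => (C t : ℝ)) x)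
    (hmax : ∀ y, LP1Feas' Z (fun s R => (qlo s R : ℝ)) (fun s R => (qhi s R : ℝ))
      (fun t => (C t : ℝ)) y → objv c y ≤ objv c x)
    (hfrac : ∃ e : T × M, ¬ IsInt (x e.1 e.2)) :
    ∃ x', LP1Feas' Z (fun s R => (qlo s R : ℝ)) (fun s R => (qhi s R : ℝ))
        (fun t => (C t : ℝ)) x' ∧
      (∀ y, LP1Feas' Z (fun s R => (qlo s R : ℝ)) (fun s R => (qhi s R : ℝ))
        (fun t => (C t : ℝ)) y → objv c y ≤ objv c x') ∧
      fracSet Z x' ⊂ fracSet Z x := by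
  classical
  obtain ⟨hpos, hub, hlb, hrow⟩ := hx
  -- fractional entries
  set F : Finset (T × M) := Finset.univ.filter (fun e : T × M => ¬ IsInt (x e.1 e.2))
    with hFdef
  have hmemF : ∀ e : T × M, e ∈ F ↔ ¬ IsInt (x e.1 e.2) := by
    intro e; rw [hFdef, Finset.mem_filter]
    exact ⟨fun h => h.2, fun h => ⟨Finset.mem_univ _, h⟩⟩
  have hF : F.Nonempty := by
    obtain ⟨e, he⟩ := hfrac
    exact ⟨e, (hmemF e).mpr he⟩
  -- minimal integral-sum constrained sets containing a given entry
  set Cand : T × M → Finset (Finset T) :=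
    fun e => (Z e.2).filter (fun R => e.1 ∈ R ∧ IsInt (∑ t ∈ R, x t e.2)) with hCand
  set key : T × M → Option (M × Finset T) := fun e =>
    if h : e ∈ F ∧ (Cand e).Nonempty then
      some (e.2, Classical.choose (Finset.exists_min_image (Cand e) Finset.card h.2))
    else none with hkey
  have hkey_spec : ∀ e n, key e = some n →
      e ∈ F ∧ n.1 = e.2 ∧ n.2 ∈ Cand e ∧ ∀ R' ∈ Cand e, n.2.card ≤ R'.card := by
    intro e n hn
    simp only [hkey] at hn
    split at hn
    next h =>
      obtain ⟨hmem, hmin⟩ := Classical.choose_spec (Finset.exists_min_image (Cand e)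
        Finset.card h.2)
      obtain rfl := Option.some_injective _ hn
      exact ⟨h.1, rfl, hmem, hmin⟩
    next h => exact absurd hn (by simp)
  have hkey_min : ∀ e n, key e = some n → ∀ R' ∈ Cand e, n.2 ⊆ R' := by
    intro e n hn R' hR'
    obtain ⟨heF, hn1, hnC, hmin⟩ := hkey_spec e n hn
    have h1 : n.2 ∈ Z e.2 := (Finset.mem_filter.mp hnC).1
    have h2 : R' ∈ Z e.2 := (Finset.mem_filter.mp hR').1
    have he1 : e.1 ∈ n.2 := (Finset.mem_filter.mp hnC).2.1
    have he2 : e.1 ∈ R' := (Finset.mem_filter.mp hR').2.1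
    rcases hlam e.2 n.2 h1 R' h2 with h | h | h
    · exact h
    · rw [Finset.eq_of_subset_of_card_le h (hmin R' hR')]
    · exact absurd he2 (Finset.disjoint_left.mp h he1)
  have hkey_some : ∀ e ∈ F, ∀ R ∈ Cand e, ∃ n, key e = some n := by
    intro e he R hR
    refine ⟨(e.2, Classical.choose (Finset.exists_min_image (Cand e) Finset.card ⟨R, hR⟩)), ?_⟩
    simp only [hkey]
    rw [dif_pos (⟨he, ⟨R, hR⟩⟩ : e ∈ F ∧ (Cand e).Nonempty)]
  have hkeyF : ∀ e n, key e = some n → e ∈ F := fun e n hn => (hkey_spec e n hn).1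
  set colNodes : Finset (M × Finset T) := F.biUnion (fun e => (key e).toFinset)
    with hcolNodes
  have hmemcol : ∀ e n, key e = some n → n ∈ colNodes := by
    intro e n hn
    exact Finset.mem_biUnion.mpr ⟨e, hkeyF e n hn, by simp [hn]⟩
  have hcol_wit : ∀ n ∈ colNodes, ∃ e, key e = some n := by
    intro n hn
    obtain ⟨e, _, he2⟩ := Finset.mem_biUnion.mp hn
    exact ⟨e, by simpa [Option.mem_toFinset] using he2⟩
  -- the partition of the fractional part of a constrained integral-sum set into node fibers
  have hpart : ∀ (s : M) (R : Finset T), R ∈ Z s → IsInt (∑ t ∈ R, x t s) →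
      ∀ φ : T × M → ℝ,
      ∑ t ∈ R.filter (fun t => (t, s) ∈ F), φ (t, s)
        = ∑ n ∈ colNodes.filter (fun n => n.1 = s ∧ n.2 ⊆ R),
            ∑ e ∈ F.filter (fun e => key e = some n), φ e := by
    intro s R hR hInt φ
    rw [← sum_filter_prod s R F φ]
    have hCmem : ∀ e ∈ F.filter (fun e => e.2 = s ∧ e.1 ∈ R), R ∈ Cand e := by
      intro e he
      obtain ⟨heF, hes, heR⟩ := Finset.mem_filter.mp he
      refine Finset.mem_filter.mpr ?_
      rw [hes]
      exact ⟨hR, heR, hInt⟩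
    have hmap : ∀ e ∈ F.filter (fun e => e.2 = s ∧ e.1 ∈ R),
        (key e).getD (s, ∅) ∈ colNodes.filter (fun n => n.1 = s ∧ n.2 ⊆ R) := by
      intro e he
      have hCe := hCmem e he
      obtain ⟨heF, hes, heR⟩ := Finset.mem_filter.mp he
      obtain ⟨n, hn⟩ := hkey_some e heF R hCe
      rw [hn, Option.getD_some]
      obtain ⟨_, hn1, _, _⟩ := hkey_spec e n hn
      exact Finset.mem_filter.mpr
        ⟨hmemcol e n hn, by rw [hn1, hes], hkey_min e n hn R hCe⟩
    rw [← Finset.sum_fiberwise_of_maps_to hmap φ]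
    refine Finset.sum_congr rfl ?_
    intro n hn
    refine Finset.sum_congr ?_ (fun _ _ => rfl)
    ext e
    constructor
    · intro hmem
      obtain ⟨hmem1, hg⟩ := Finset.mem_filter.mp hmem
      obtain ⟨heF, hes, heR⟩ := Finset.mem_filter.mp hmem1
      obtain ⟨m, hm⟩ := hkey_some e heF R (hCmem e hmem1)
      rw [hm, Option.getD_some] at hg
      exact Finset.mem_filter.mpr ⟨heF, by rw [hm, hg]⟩
    · intro hmem
      obtain ⟨heF, hk⟩ := Finset.mem_filter.mp hmem
      obtain ⟨_, hn1, hnC, _⟩ := hkey_spec e n hk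
      obtain ⟨hns, hnR⟩ := (Finset.mem_filter.mp hn).2
      have hes : e.2 = s := by rw [← hn1, hns]
      have heR : e.1 ∈ n.2 := (Finset.mem_filter.mp hnC).2.1
      refine Finset.mem_filter.mpr ⟨Finset.mem_filter.mpr ⟨heF, hes, hnR heR⟩, ?_⟩
      rw [hk, Option.getD_some]
  -- entries not in F have integral values
  have hnotF : ∀ (t : T) (s : M), (t, s) ∉ F → IsInt (x t s) := by
    intro t s h
    by_contra hc
    exact h ((hmemF (t, s)).mpr hc)
  -- fiber sums of x are integral, by strong induction on the node set
  have hIntFib : ∀ (N : ℕ) (s : M) (R : Finset T), R.card ≤ N → R ∈ Z s →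
      IsInt (∑ t ∈ R, x t s) →
      IsInt (∑ e ∈ F.filter (fun e => key e = some (s, R)), x e.1 e.2) := by
    intro N
    induction N with
    | zero =>
      intro s R hcard hR hInt
      have hRempty : R = ∅ := Finset.card_eq_zero.mp (Nat.le_zero.mp hcard)
      have : F.filter (fun e => key e = some (s, R)) = ∅ := by
        rw [Finset.filter_eq_empty_iff]
        intro e _ hk
        obtain ⟨_, _, hnC, _⟩ := hkey_spec e (s, R) hk
        have : e.1 ∈ R := (Finset.mem_filter.mp hnC).2.1
        rw [hRempty] at this
        exact absurd this (Finset.notMem_empty _)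
      rw [this, Finset.sum_empty]; exact isInt_zero
    | succ N ih =>
      intro s R hcard hR hInt
      set subnodes := colNodes.filter (fun n => n.1 = s ∧ n.2 ⊆ R) with hsubnodes
      have hA : IsInt (∑ n ∈ subnodes,
          ∑ e ∈ F.filter (fun e => key e = some n), x e.1 e.2) := by
        have h1 := hpart s R hR hInt (fun e => x e.1 e.2)
        have hsplit : ∑ t ∈ R, x t s
            = ∑ t ∈ R.filter (fun t => (t, s) ∈ F), x t s
              + ∑ t ∈ R.filter (fun t => ¬((t, s) ∈ F)), x t s :=
          (Finset.sum_filter_add_sum_filter_not R _ _).symm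
        have h2 : IsInt (∑ t ∈ R.filter (fun t => ¬((t, s) ∈ F)), x t s) :=
          isInt_sum (fun t ht => hnotF t s (Finset.mem_filter.mp ht).2)
        have h3 : IsInt (∑ t ∈ R.filter (fun t => (t, s) ∈ F), x t s) := by
          have heq : ∑ t ∈ R.filter (fun t => (t, s) ∈ F), x t s
              = (∑ t ∈ R, x t s) - ∑ t ∈ R.filter (fun t => ¬((t, s) ∈ F)), x t s := by
            rw [hsplit]; ring
          rw [heq]; exact hInt.sub h2
        rw [← h1]
        exact h3
      by_cases hsR : (s, R) ∈ colNodes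
      · have hsub : (s, R) ∈ subnodes :=
          Finset.mem_filter.mpr ⟨hsR, rfl, Finset.Subset.refl _⟩
        have heq := Finset.add_sum_erase subnodes
          (fun n => ∑ e ∈ F.filter (fun e => key e = some n), x e.1 e.2) hsub
        have hrest : IsInt (∑ n ∈ subnodes.erase (s, R),
            ∑ e ∈ F.filter (fun e => key e = some n), x e.1 e.2) := by
          refine isInt_sum ?_
          intro n hn'
          have hnsub := Finset.mem_of_mem_erase hn'
          obtain ⟨hncol, hns, hnR⟩ := Finset.mem_filter.mp hnsub
          have hne : n ≠ (s, R) := Finset.ne_of_mem_erase hn'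
          obtain ⟨e, he⟩ := hcol_wit n hncol
          obtain ⟨heF, hn1, hnC, _⟩ := hkey_spec e n he
          have hes : e.2 = s := by rw [← hn1, hns]
          have hZ : n.2 ∈ Z s := by
            have := (Finset.mem_filter.mp hnC).1; rwa [hes] at this
          have hII : IsInt (∑ t ∈ n.2, x t s) := by
            have := (Finset.mem_filter.mp hnC).2.2; rwa [hes] at this
          have hcard2 : n.2.card ≤ N := by
            have hne2 : n.2 ≠ R := fun h => hne (Prod.ext hns h)
            have := Finset.card_lt_card (ssubset_of_subset_of_ne hnR hne2)
            omega
          have hfib := ih s n.2 hcard2 hZ hII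
          have hn2 : (s, n.2) = n := by
            rw [← hns]
          rwa [hn2] at hfib
        have hfin : (∑ e ∈ F.filter (fun e => key e = some (s, R)), x e.1 e.2)
            = (∑ n ∈ subnodes,
                ∑ e ∈ F.filter (fun e => key e = some n), x e.1 e.2)
              - ∑ n ∈ subnodes.erase (s, R),
                ∑ e ∈ F.filter (fun e => key e = some n), x e.1 e.2 := by
          rw [← heq]; ring
        rw [hfin]
        exact hA.sub hrest
      · have : F.filter (fun e => key e = some (s, R)) = ∅ := by
          rw [Finset.filter_eq_empty_iff]
          intro e _ hk
          exact hsR (hmemcol e _ hk)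
        rw [this, Finset.sum_empty]; exact isInt_zero
  -- every column node has at least two fractional entries in its fiber
  have hcol2 : ∀ n ∈ colNodes, 2 ≤ (F.filter (fun e => key e = some n)).card := by
    intro n hn
    obtain ⟨e, he⟩ := hcol_wit n hn
    obtain ⟨heF, hn1, hnC, _⟩ := hkey_spec e n he
    have hZ : n.2 ∈ Z n.1 := by
      have := (Finset.mem_filter.mp hnC).1; rwa [← hn1] at this
    have hII : IsInt (∑ t ∈ n.2, x t n.1) := by
      have := (Finset.mem_filter.mp hnC).2.2; rwa [← hn1] at this
    have hfib := hIntFib n.2.card n.1 n.2 le_rfl hZ hII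
    rw [Prod.mk.eta] at hfib
    have hmem : e ∈ F.filter (fun e => key e = some n) := Finset.mem_filter.mpr ⟨heF, he⟩
    by_contra hlt
    push_neg at hlt
    interval_cases h : (F.filter (fun e => key e = some n)).card
    · rw [Finset.card_eq_zero] at h
      rw [h] at hmem; exact absurd hmem (Finset.notMem_empty _)
    · obtain ⟨a, ha⟩ := Finset.card_eq_one.mp h
      rw [ha] at hmem hfib
      rw [Finset.mem_singleton] at hmem
      rw [Finset.sum_singleton, ← hmem] at hfib
      exact absurd hfib ((hmemF e).mp heF)
  -- every row with a fractional entry has at least two fractional entries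
  have hrow2 : ∀ t ∈ F.image Prod.fst, 2 ≤ (F.filter (fun e => e.1 = t)).card := by
    intro t ht
    obtain ⟨e, heF, het⟩ := Finset.mem_image.mp ht
    have hfibsum : IsInt (∑ e ∈ F.filter (fun e => e.1 = t), x e.1 e.2) := by
      rw [row_reindex t F (fun e => x e.1 e.2)]
      have hsplit : ∑ s, x t s
          = ∑ s ∈ Finset.univ.filter (fun s => (t, s) ∈ F), x t s
            + ∑ s ∈ Finset.univ.filter (fun s => ¬((t, s) ∈ F)), x t s :=
        (Finset.sum_filter_add_sum_filter_not Finset.univ _ _).symm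
      have h2 : IsInt (∑ s ∈ Finset.univ.filter (fun s => ¬((t, s) ∈ F)), x t s) :=
        isInt_sum (fun s hs => hnotF t s (Finset.mem_filter.mp hs).2)
      have h1 : IsInt (∑ s, x t s) := by rw [hrow t]; exact ⟨C t, rfl⟩
      have heq : ∑ s ∈ Finset.univ.filter (fun s => (t, s) ∈ F), x t s
          = (∑ s, x t s) - ∑ s ∈ Finset.univ.filter (fun s => ¬((t, s) ∈ F)), x t s := by
        rw [hsplit]; ring
      rw [heq]; exact h1.sub h2
    have hmem : e ∈ F.filter (fun e => e.1 = t) := Finset.mem_filter.mpr ⟨heF, het⟩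
    by_contra hlt
    push_neg at hlt
    interval_cases h : (F.filter (fun e => e.1 = t)).card
    · rw [Finset.card_eq_zero] at h
      rw [h] at hmem; exact absurd hmem (Finset.notMem_empty _)
    · obtain ⟨a, ha⟩ := Finset.card_eq_one.mp h
      rw [ha] at hmem hfibsum
      rw [Finset.mem_singleton] at hmem
      rw [Finset.sum_singleton, ← hmem] at hfibsum
      exact absurd hfibsum ((hmemF e).mp heF)
  -- the main perturbation step, given a kernel direction with nonnegative objective value
  have hfinal : ∀ D : T × M → ℝ,
      (∃ e, D e ≠ 0) → (∀ e, e ∉ F → D e = 0) →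
      (∀ t, ∑ e ∈ F.filter (fun e => e.1 = t), D e = 0) →
      (∀ n, ∑ e ∈ F.filter (fun e => key e = some n), D e = 0) →
      0 ≤ (∑ t, ∑ s, c t s * D (t, s)) →
      ∃ x', LP1Feas' Z (fun s R => (qlo s R : ℝ)) (fun s R => (qhi s R : ℝ))
          (fun t => (C t : ℝ)) x' ∧
        (∀ y, LP1Feas' Z (fun s R => (qlo s R : ℝ)) (fun s R => (qhi s R : ℝ))
          (fun t => (C t : ℝ)) y → objv c y ≤ objv c x') ∧
        fracSet Z x' ⊂ fracSet Z x := by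
    intro D hDne hDsupp hDrow0 hDcol0 hobjD
    have hDint : ∀ t s, IsInt (x t s) → D (t, s) = 0 :=
      fun t s h => hDsupp (t, s) (fun hmem => (hmemF _).mp hmem h)
    have hDrow : ∀ t, ∑ s, D (t, s) = 0 := by
      intro t
      rw [← Finset.sum_filter_add_sum_filter_not Finset.univ (fun s => (t, s) ∈ F)
        (fun s => D (t, s))]
      have h2 : ∑ s ∈ Finset.univ.filter (fun s => ¬((t, s) ∈ F)), D (t, s) = 0 :=
        Finset.sum_eq_zero (fun s hs => hDsupp _ (Finset.mem_filter.mp hs).2)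
      have h1 : ∑ s ∈ Finset.univ.filter (fun s => (t, s) ∈ F), D (t, s) = 0 := by
        rw [← row_reindex t F (fun e => D e)]; exact hDrow0 t
      rw [h1, h2, add_zero]
    have hDcol : ∀ s R, R ∈ Z s → IsInt (∑ t ∈ R, x t s) → ∑ t ∈ R, D (t, s) = 0 := by
      intro s R hR hInt
      rw [← Finset.sum_filter_add_sum_filter_not R (fun t => (t, s) ∈ F)
        (fun t => D (t, s))]
      have h2 : ∑ t ∈ R.filter (fun t => ¬((t, s) ∈ F)), D (t, s) = 0 :=
        Finset.sum_eq_zero (fun t ht => hDsupp _ (Finset.mem_filter.mp ht).2)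
      have h1 : ∑ t ∈ R.filter (fun t => (t, s) ∈ F), D (t, s) = 0 := by
        rw [hpart s R hR hInt (fun e => D e)]
        exact Finset.sum_eq_zero (fun n _ => hDcol0 n)
      rw [h1, h2, add_zero]
    -- candidate step sizes
    set Ecoords : Finset ℝ :=
      (F.filter (fun e => D e ≠ 0)).image (fun e => step (x e.1 e.2) (D e)) with hEcoords
    set pairsAll : Finset (M × Finset T) :=
      (Finset.univ : Finset M).biUnion (fun s => (Z s).image (fun R => (s, R)))
      with hpairsAll
    have hmem_pairsAll : ∀ p : M × Finset T, p ∈ pairsAll ↔ p.2 ∈ Z p.1 := by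
      intro p
      rw [hpairsAll]
      constructor
      · intro hp
        obtain ⟨s, _, hp2⟩ := Finset.mem_biUnion.mp hp
        obtain ⟨R, hR, hp3⟩ := Finset.mem_image.mp hp2
        rw [← hp3]; exact hR
      · intro hp
        exact Finset.mem_biUnion.mpr ⟨p.1, Finset.mem_univ _,
          Finset.mem_image.mpr ⟨p.2, hp, Prod.mk.eta⟩⟩
    set Epairs : Finset ℝ :=
      (pairsAll.filter (fun p => ¬ IsInt (∑ t ∈ p.2, x t p.1)
          ∧ (∑ t ∈ p.2, D (t, p.1)) ≠ 0)).image
        (fun p => step (∑ t ∈ p.2, x t p.1) (∑ t ∈ p.2, D (t, p.1))) with hEpairs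
    set Eall : Finset ℝ := Ecoords ∪ Epairs with hEall
    have hne : Eall.Nonempty := by
      obtain ⟨e1, he1⟩ := hDne
      have he1F : e1 ∈ F := by
        by_contra h
        exact he1 (hDsupp e1 h)
      refine ⟨step (x e1.1 e1.2) (D e1), ?_⟩
      rw [hEall]
      exact Finset.mem_union_left _ (Finset.mem_image_of_mem _
        (Finset.mem_filter.mpr ⟨he1F, he1⟩))
    set ε : ℝ := Eall.min' hne with hεdef
    have hεmem : ε ∈ Eall := Finset.min'_mem Eall hne
    have hεpos : 0 < ε := by
      rw [hεdef, Finset.lt_min'_iff]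
      intro b hb
      rw [hEall] at hb
      rcases Finset.mem_union.mp hb with hb | hb
      · obtain ⟨e, he, hbe⟩ := Finset.mem_image.mp hb
        obtain ⟨heF, heD⟩ := Finset.mem_filter.mp he
        rw [← hbe]
        exact step_pos ((hmemF e).mp heF) heD
      · obtain ⟨p, hp, hbp⟩ := Finset.mem_image.mp hb
        obtain ⟨_, hfr, hD⟩ := Finset.mem_filter.mp hp
        rw [← hbp]
        exact step_pos hfr hD
    set x' : T → M → ℝ := fun t s => x t s + ε * D (t, s) with hx'
    have hcoord : ∀ t s, D (t, s) ≠ 0 →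
        ((⌊x t s⌋ : ℝ) ≤ x' t s ∧ x' t s ≤ (⌈x t s⌉ : ℝ)) := by
      intro t s hD0
      have heF : (t, s) ∈ F := by
        by_contra h
        exact hD0 (hDsupp (t, s) h)
      have hfr : ¬ IsInt (x t s) := (hmemF (t, s)).mp heF
      have hstep : step (x t s) (D (t, s)) ∈ Eall := by
        rw [hEall]
        exact Finset.mem_union_left _ (Finset.mem_image_of_mem _
          (Finset.mem_filter.mpr ⟨heF, hD0⟩))
      exact move_mem hfr hD0 (le_of_lt hεpos) (Finset.min'_le _ _ hstep)
    have hsum_move : ∀ (s : M) (R : Finset T),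
        ∑ t ∈ R, x' t s = (∑ t ∈ R, x t s) + ε * ∑ t ∈ R, D (t, s) := by
      intro s R
      rw [hx', Finset.mul_sum, ← Finset.sum_add_distrib]
    have hpairbound : ∀ s R, R ∈ Z s → ¬ IsInt (∑ t ∈ R, x t s) →
        (∑ t ∈ R, D (t, s)) ≠ 0 →
        ((⌊∑ t ∈ R, x t s⌋ : ℝ) ≤ ∑ t ∈ R, x' t s
          ∧ ∑ t ∈ R, x' t s ≤ (⌈∑ t ∈ R, x t s⌉ : ℝ)) := by
      intro s R hR hfr hD0
      have hp : (s, R) ∈ pairsAll := (hmem_pairsAll (s, R)).mpr hR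
      have hstep : step (∑ t ∈ R, x t s) (∑ t ∈ R, D (t, s)) ∈ Eall := by
        rw [hEall]
        refine Finset.mem_union_right _ (Finset.mem_image_of_mem _
          (Finset.mem_filter.mpr ⟨hp, hfr, hD0⟩))
      rw [hsum_move s R]
      exact move_mem hfr hD0 (le_of_lt hεpos) (Finset.min'_le _ _ hstep)
    have hfeas' : LP1Feas' Z (fun s R => (qlo s R : ℝ)) (fun s R => (qhi s R : ℝ))
        (fun t => (C t : ℝ)) x' := by
      refine ⟨?_, ?_, ?_, ?_⟩
      · intro t s
        by_cases hD0 : D (t, s) = 0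
        · rw [hx']
          simp only [hD0, mul_zero, add_zero]
          exact hpos t s
        · have h1 := (hcoord t s hD0).1
          have h2 : (0 : ℝ) ≤ (⌊x t s⌋ : ℝ) := by
            exact_mod_cast Int.floor_nonneg.mpr (hpos t s)
          linarith
      · intro s R hR
        by_cases hInt : IsInt (∑ t ∈ R, x t s)
        · rw [hsum_move s R, hDcol s R hR hInt, mul_zero, add_zero]
          exact hub s R hR
        · by_cases hD0 : (∑ t ∈ R, D (t, s)) = 0
          · rw [hsum_move s R, hD0, mul_zero, add_zero]
            exact hub s R hR
          · have h1 := (hpairbound s R hR hInt hD0).2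
            have h2 : (⌈∑ t ∈ R, x t s⌉ : ℝ) ≤ ((qhi s R : ℤ) : ℝ) := by
              exact_mod_cast Int.ceil_le.mpr (hub s R hR)
            exact le_trans h1 h2
      · intro s R hR
        by_cases hInt : IsInt (∑ t ∈ R, x t s)
        · rw [hsum_move s R, hDcol s R hR hInt, mul_zero, add_zero]
          exact hlb s R hR
        · by_cases hD0 : (∑ t ∈ R, D (t, s)) = 0
          · rw [hsum_move s R, hD0, mul_zero, add_zero]
            exact hlb s R hR
          · have h1 := (hpairbound s R hR hInt hD0).1
            have h2 : ((qlo s R : ℤ) : ℝ) ≤ (⌊∑ t ∈ R, x t s⌋ : ℝ) := by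
              exact_mod_cast Int.le_floor.mpr (hlb s R hR)
            exact le_trans h2 h1
      · intro t
        rw [hx']
        rw [Finset.sum_add_distrib, ← Finset.mul_sum, hDrow t, mul_zero, add_zero]
        exact hrow t
    have hobj' : objv c x' = objv c x + ε * (∑ t, ∑ s, c t s * D (t, s)) := by
      simp only [objv, hx']
      rw [Finset.mul_sum, ← Finset.sum_add_distrib]
      refine Finset.sum_congr rfl ?_
      intro t _
      rw [Finset.mul_sum, ← Finset.sum_add_distrib]
      refine Finset.sum_congr rfl ?_
      intro s _
      ring
    have hge : objv c x ≤ objv c x' := by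
      rw [hobj']
      have := mul_nonneg (le_of_lt hεpos) hobjD
      linarith
    have hmax' : ∀ y, LP1Feas' Z (fun s R => (qlo s R : ℝ)) (fun s R => (qhi s R : ℝ))
        (fun t => (C t : ℝ)) y → objv c y ≤ objv c x' :=
      fun y hy => le_trans (hmax y hy) hge
    have hsub : fracSet Z x' ⊆ fracSet Z x := by
      intro j hj
      rcases j with e | p
      · have he := Finset.mem_filter.mp (Finset.inl_mem_disjSum.mp hj)
        refine Finset.inl_mem_disjSum.mpr (Finset.mem_filter.mpr
          ⟨Finset.mem_univ _, ?_⟩)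
        intro hInt
        refine he.2 ?_
        rw [hx']
        simp only [hDint e.1 e.2 hInt, mul_zero, add_zero]
        exact hInt
      · have hp := Finset.mem_filter.mp (Finset.inr_mem_disjSum.mp hj)
        refine Finset.inr_mem_disjSum.mpr (Finset.mem_filter.mpr ⟨hp.1, ?_⟩)
        intro hInt
        refine hp.2 ?_
        have hZ : p.2 ∈ Z p.1 := by
          obtain ⟨s, _, hp2⟩ := Finset.mem_biUnion.mp hp.1
          obtain ⟨R, hR, hp3⟩ := Finset.mem_image.mp hp2
          rw [← hp3]; exact hR
        rw [show (∑ t ∈ p.2, x' t p.1) = ∑ t ∈ p.2, x' t p.1 from rfl]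
        rw [hsum_move p.1 p.2, hDcol p.1 p.2 hZ hInt, mul_zero, add_zero]
        exact hInt
    have hwit : ∃ j ∈ fracSet Z x, j ∉ fracSet Z x' := by
      rw [hEall] at hεmem
      rcases Finset.mem_union.mp hεmem with hb | hb
      · obtain ⟨e, he, hbe⟩ := Finset.mem_image.mp hb
        obtain ⟨heF, heD⟩ := Finset.mem_filter.mp he
        have hfr : ¬ IsInt (x e.1 e.2) := (hmemF e).mp heF
        refine ⟨Sum.inl e, Finset.inl_mem_disjSum.mpr
          (Finset.mem_filter.mpr ⟨Finset.mem_univ _, hfr⟩), ?_⟩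
        intro hmem
        have := (Finset.mem_filter.mp (Finset.inl_mem_disjSum.mp hmem)).2
        have hI : IsInt (x e.1 e.2 + step (x e.1 e.2) (D e) * D e) := move_hits heD
        rw [hbe] at hI
        exact this hI
      · obtain ⟨p, hp, hbp⟩ := Finset.mem_image.mp hb
        obtain ⟨hpA, hfr, hD0⟩ := Finset.mem_filter.mp hp
        have hpA' : p ∈ (Finset.univ.biUnion fun s : M => (Z s).image fun R => (s, R)) := by
          rw [hpairsAll] at hpA; exact hpA
        refine ⟨Sum.inr p, Finset.inr_mem_disjSum.mpr
          (Finset.mem_filter.mpr ⟨hpA', hfr⟩), ?_⟩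
        intro hmem
        have := (Finset.mem_filter.mp (Finset.inr_mem_disjSum.mp hmem)).2
        have hI : IsInt ((∑ t ∈ p.2, x t p.1)
            + step (∑ t ∈ p.2, x t p.1) (∑ t ∈ p.2, D (t, p.1)) * (∑ t ∈ p.2, D (t, p.1))) :=
          move_hits hD0
        rw [hbp] at hI
        refine this ?_
        rw [hsum_move p.1 p.2]
        exact hI
    exact ⟨x', hfeas', hmax', (Finset.ssubset_iff_of_subset hsub).mpr hwit⟩
  -- obtain the kernel direction and fix its sign
  obtain ⟨D, hDne, hDsupp, hDrow0, hDcol0⟩ := exists_kernel F hF key hkeyF hrow2 hcol2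
  rcases le_or_gt 0 (∑ t, ∑ s, c t s * D (t, s)) with h | h
  · exact hfinal D hDne hDsupp hDrow0 hDcol0 h
  · refine hfinal (fun e => -D e) ?_ ?_ ?_ ?_ ?_
    · obtain ⟨e, he⟩ := hDne
      exact ⟨e, neg_ne_zero.mpr he⟩
    · intro e he
      show -D e = 0
      rw [hDsupp e he, neg_zero]
    · intro t
      show ∑ e ∈ F.filter (fun e => e.1 = t), -D e = 0
      rw [Finset.sum_neg_distrib, hDrow0 t, neg_zero]
    · intro n
      show ∑ e ∈ F.filter (fun e => key e = some n), -D e = 0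
      rw [Finset.sum_neg_distrib, hDcol0 n, neg_zero]
    · show 0 ≤ ∑ t, ∑ s, c t s * -D (t, s)
      have : ∑ t, ∑ s, c t s * -D (t, s) = -∑ t, ∑ s, c t s * D (t, s) := by
        rw [← Finset.sum_neg_distrib]
        refine Finset.sum_congr rfl (fun t _ => ?_)
        rw [← Finset.sum_neg_distrib]
        refine Finset.sum_congr rfl (fun s _ => ?_)
        ring
      rw [this]
      linarith

set_option maxHeartbeats 1000000 in
open scoped Classical in
theorem master
    (Z : M → Finset (Finset T)) (qlo qhi : M → Finset T → ℤ) (C : T → ℤ)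
    (hlam : ∀ s, ∀ R ∈ Z s, ∀ R' ∈ Z s, R ⊆ R' ∨ R' ⊆ R ∨ Disjoint R R')
    (c : T → M → ℝ) {x0 : T → M → ℝ}
    (hx0 : LP1Feas' Z (fun s R => (qlo s R : ℝ)) (fun s R => (qhi s R : ℝ))
      (fun t => (C t : ℝ)) x0) :
    ∃ xZ : T → M → ℤ,
      LP1Feas' Z (fun s R => (qlo s R : ℝ)) (fun s R => (qhi s R : ℝ)) (fun t => (C t : ℝ))
        (fun t s => (xZ t s : ℝ)) ∧
      ∀ y, LP1Feas' Z (fun s R => (qlo s R : ℝ)) (fun s R => (qhi s R : ℝ))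
        (fun t => (C t : ℝ)) y → objv c y ≤ objv c (fun t s => (xZ t s : ℝ)) := by
  classical
  set Feas : (T → M → ℝ) → Prop := fun y =>
    LP1Feas' Z (fun s R => (qlo s R : ℝ)) (fun s R => (qhi s R : ℝ)) (fun t => (C t : ℝ)) y
    with hFeas
  set P : Set (T → M → ℝ) := {y | Feas y} with hP
  have hc1 : ∀ t s, Continuous (fun y : T → M → ℝ => y t s) :=
    fun t s => (continuous_apply s).comp (continuous_apply t)
  have hc2 : ∀ (s : M) (R : Finset T), Continuous (fun y : T → M → ℝ => ∑ t ∈ R, y t s) :=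
    fun s R => continuous_finset_sum _ (fun t _ => hc1 t s)
  have hclosed : IsClosed P := by
    have hPeq : P = (⋂ t, ⋂ s, {y : T → M → ℝ | 0 ≤ y t s})
        ∩ ((⋂ s, ⋂ R ∈ Z s, {y : T → M → ℝ | ∑ t ∈ R, y t s ≤ (qhi s R : ℝ)})
        ∩ ((⋂ s, ⋂ R ∈ Z s, {y : T → M → ℝ | (qlo s R : ℝ) ≤ ∑ t ∈ R, y t s})
        ∩ (⋂ t, {y : T → M → ℝ | ∑ s, y t s = (C t : ℝ)}))) := by
      ext y
      simp only [hP, hFeas, LP1Feas', Set.mem_setOf_eq, Set.mem_inter_iff, Set.mem_iInter]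
    rw [hPeq]
    refine IsClosed.inter ?_ (IsClosed.inter ?_ (IsClosed.inter ?_ ?_))
    · exact isClosed_iInter (fun t => isClosed_iInter (fun s =>
        isClosed_le continuous_const (hc1 t s)))
    · exact isClosed_iInter (fun s => isClosed_iInter (fun R => isClosed_iInter (fun _ =>
        isClosed_le (hc2 s R) continuous_const)))
    · exact isClosed_iInter (fun s => isClosed_iInter (fun R => isClosed_iInter (fun _ =>
        isClosed_le continuous_const (hc2 s R))))
    · exact isClosed_iInter (fun t => isClosed_eq
        (continuous_finset_sum _ (fun s _ => hc1 t s)) continuous_const)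
  have hsubset : P ⊆ Set.Icc (0 : T → M → ℝ) (fun t _ => (C t : ℝ)) := by
    intro y hy
    obtain ⟨hp, _, _, hr⟩ := hy
    constructor
    · refine Pi.le_def.mpr fun t => Pi.le_def.mpr fun s => hp t s
    · refine Pi.le_def.mpr fun t => Pi.le_def.mpr fun s => ?_
      calc y t s ≤ ∑ s', y t s' :=
            Finset.single_le_sum (fun s' _ => hp t s') (Finset.mem_univ s)
        _ = (C t : ℝ) := hr t
  have hcompact : IsCompact P := IsCompact.of_isClosed_subset isCompact_Icc hclosed hsubset
  have hPne : P.Nonempty := ⟨x0, hx0⟩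
  have hobjcont : Continuous (objv c) := by
    apply continuous_finset_sum
    intro t _
    exact continuous_finset_sum _ (fun s _ => continuous_const.mul (hc1 t s))
  obtain ⟨xm, hxm, hxmax⟩ := hcompact.exists_isMaxOn hPne hobjcont.continuousOn
  have hextract : ∀ y : T → M → ℝ, Feas y →
      (∀ z, Feas z → objv c z ≤ objv c y) → (∀ t s, IsInt (y t s)) →
      ∃ xZ : T → M → ℤ,
        LP1Feas' Z (fun s R => (qlo s R : ℝ)) (fun s R => (qhi s R : ℝ)) (fun t => (C t : ℝ))
          (fun t s => (xZ t s : ℝ)) ∧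
        ∀ z, LP1Feas' Z (fun s R => (qlo s R : ℝ)) (fun s R => (qhi s R : ℝ))
          (fun t => (C t : ℝ)) z → objv c z ≤ objv c (fun t s => (xZ t s : ℝ)) := by
    intro y hy hmaxy hall
    refine ⟨fun t s => Classical.choose (hall t s), ?_, ?_⟩
    · have hcast : (fun t s => ((Classical.choose (hall t s) : ℤ) : ℝ)) = y :=
        funext fun t => funext fun s => Classical.choose_spec (hall t s)
      rw [hcast]
      exact hy
    · intro z hz
      have hcast : (fun t s => ((Classical.choose (hall t s) : ℤ) : ℝ)) = y :=
        funext fun t => funext fun s => Classical.choose_spec (hall t s)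
      rw [hcast]
      exact hmaxy z hz
  have main : ∀ (k : ℕ) (y : T → M → ℝ), Feas y →
      (∀ z, Feas z → objv c z ≤ objv c y) → (fracSet Z y).card ≤ k →
      ∃ xZ : T → M → ℤ,
        LP1Feas' Z (fun s R => (qlo s R : ℝ)) (fun s R => (qhi s R : ℝ)) (fun t => (C t : ℝ))
          (fun t s => (xZ t s : ℝ)) ∧
        ∀ z, LP1Feas' Z (fun s R => (qlo s R : ℝ)) (fun s R => (qhi s R : ℝ))
          (fun t => (C t : ℝ)) z → objv c z ≤ objv c (fun t s => (xZ t s : ℝ)) := by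
    intro k
    induction k with
    | zero =>
      intro y hy hmaxy hcard
      refine hextract y hy hmaxy ?_
      intro t s
      by_contra h
      have : Sum.inl (t, s) ∈ fracSet Z y :=
        Finset.inl_mem_disjSum.mpr (Finset.mem_filter.mpr ⟨Finset.mem_univ _, h⟩)
      have := Finset.card_pos.mpr ⟨_, this⟩
      omega
    | succ k ih =>
      intro y hy hmaxy hcard
      by_cases hall : ∀ t s, IsInt (y t s)
      · exact hextract y hy hmaxy hall
      · push_neg at hall
        obtain ⟨t, s, h⟩ := hall
        obtain ⟨x', hx', hmax', hss⟩ := step_lemma Z qlo qhi C hlam c hy hmaxy ⟨(t, s), h⟩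
        have hlt : (fracSet Z x').card < (fracSet Z y).card := Finset.card_lt_card hss
        exact ih x' hx' hmax' (by omega)
  exact main (fracSet Z xm).card xm hxm (fun z hz => hxmax hz) le_rfl
end SD14

open Finset in
/-- Feasibility for the original fractional assignment LP (LP1). -/
def LP1Feas {T M : Type} [Fintype T] [Fintype M]
    (Z : M → Finset (Finset T)) (qlo qhi : M → Finset T → ℝ)
    (C : T → ℝ) (x : T → M → ℝ) : Prop :=
  (∀ t s, 0 ≤ x t s) ∧
  (∀ s, ∀ R ∈ Z s, ∑ t ∈ R, x t s ≤ qhi s R) ∧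
  (∀ s, ∀ R ∈ Z s, qlo s R ≤ ∑ t ∈ R, x t s) ∧
  (∀ t, ∑ s, x t s = C t)

open Finset in
/-- Feasibility for the auxiliary LP (LP2) with current data `(y, Δ)`. -/
def LP2Feas {T M : Type} [Fintype T] [Fintype M] [DecidableEq M]
    (phi : M) (Z : M → Finset (Finset T)) (qlo qhi : M → Finset T → ℝ)
    (C : T → ℝ) (OPT : ℝ) (y Δ : T → M → ℝ) (x : T → M → ℝ) : Prop :=
  (∀ t s, 0 ≤ x t s) ∧
  (OPT ≤ (∑ t, ∑ s ∈ univ.erase phi, x t s) + ∑ s ∈ univ.erase phi, ∑ t, y t s) ∧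
  (∀ s, ∀ R ∈ Z s, (∑ t ∈ R, x t s) + (∑ t ∈ R, y t s) ≤ qhi s R + ∑ t ∈ R, Δ t s) ∧
  (∀ s, ∀ R ∈ Z s, qlo s R + (∑ t ∈ R, Δ t s) ≤ (∑ t ∈ R, x t s) + ∑ t ∈ R, y t s) ∧
  (∀ t, (∑ s, x t s) + ∑ s, y t s = C t)

namespace SD14

lemma LP1Feas_eq_LP1Feas' {T M : Type} [Fintype T] [Fintype M]
    (Z : M → Finset (Finset T)) (qlo qhi : M → Finset T → ℝ)
    (C : T → ℝ) (x : T → M → ℝ) :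
    LP1Feas Z qlo qhi C x ↔ LP1Feas' Z qlo qhi C x := Iff.rfl

open Finset in
lemma objv_erase_eq {T M : Type} [Fintype T] [Fintype M] [DecidableEq M] (phi : M)
    (y : T → M → ℝ) :
    objv (fun _ s => if s = phi then 0 else 1) y = ∑ t, ∑ s ∈ univ.erase phi, y t s := by
  classical
  refine Finset.sum_congr rfl (fun t _ => ?_)
  calc ∑ s, (if s = phi then (0:ℝ) else 1) * y t s
      = ∑ s, (if s ≠ phi then y t s else 0) := by
        refine Finset.sum_congr rfl (fun s _ => ?_)
        by_cases h : s = phi <;> simp [h]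
    _ = ∑ s ∈ univ.filter (fun s => s ≠ phi), y t s := (Finset.sum_filter _ _).symm
    _ = ∑ s ∈ univ.erase phi, y t s := by rw [Finset.filter_ne']

open Finset in
lemma objv_pick_eq {T M : Type} [Fintype T] [Fintype M] [DecidableEq T] [DecidableEq M]
    (t0 : T) (s0 : M) (y : T → M → ℝ) :
    objv (fun t s => if t = t0 ∧ s = s0 then 1 else 0) y = y t0 s0 := by
  classical
  unfold objv
  rw [Finset.sum_eq_single t0]
  · rw [Finset.sum_eq_single s0]
    · simp
    · intro s _ hs; simp [hs]
    · intro h; exact absurd (Finset.mem_univ _) h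
  · intro t _ ht
    refine Finset.sum_eq_zero (fun s _ => ?_)
    simp [ht]
  · intro h; exact absurd (Finset.mem_univ _) h

end SD14

set_option maxHeartbeats 2000000 in
open Finset in
/-- **Proposition 1 (laminar problems).**  Suppose the assignment problem is laminar (for
every school `s` any two constrained type sets in `Z s` are nested or disjoint) and all
quotas and type counts are integers, and `OPT` is the optimal value of LP1.  Then at any
step of the serial dictatorship with dynamic menus in which the incomplete assignment `y`
is integral and `Δ ≡ 0`, no student is partially assigned: for every type `t` and school
`s`, the LP value `f(t,s) = max x t s` over LP2-feasible `x` is never strictly between `0`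
and `1`.  Hence the algorithm outputs an integral assignment that is feasible with respect
to the original quotas `q` (achieving `OPT`) with `Δ ≡ 0`. -/
theorem stmt14 {T M : Type} [Fintype T] [Fintype M] [DecidableEq T] [DecidableEq M]
    (phi : M) (Z : M → Finset (Finset T))
    (qloZ qhiZ : M → Finset T → ℤ) (CZ : T → ℤ) (OPT : ℝ)
    (hZphi : Z phi = ∅)
    (hlam : ∀ s, ∀ R ∈ Z s, ∀ R' ∈ Z s, R ⊆ R' ∨ R' ⊆ R ∨ Disjoint R R')
    (hOPT : IsGreatest {v : ℝ | ∃ x : T → M → ℝ,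
      LP1Feas Z (fun s R => (qloZ s R : ℝ)) (fun s R => (qhiZ s R : ℝ))
        (fun t => (CZ t : ℝ)) x ∧ ∑ t, ∑ s ∈ univ.erase phi, x t s = v} OPT) :
    (∀ (yZ : T → M → ℤ) (t : T) (s : M),
      ¬ (0 < sSup {a : ℝ | ∃ x, LP2Feas phi Z (fun s R => (qloZ s R : ℝ))
            (fun s R => (qhiZ s R : ℝ)) (fun t => (CZ t : ℝ)) OPT
            (fun t s => (yZ t s : ℝ)) (fun _ _ => 0) x ∧ x t s = a} ∧
          sSup {a : ℝ | ∃ x, LP2Feas phi Z (fun s R => (qloZ s R : ℝ))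
            (fun s R => (qhiZ s R : ℝ)) (fun t => (CZ t : ℝ)) OPT
            (fun t s => (yZ t s : ℝ)) (fun _ _ => 0) x ∧ x t s = a} < 1)) ∧
    (∃ xZ : T → M → ℤ,
      LP1Feas Z (fun s R => (qloZ s R : ℝ)) (fun s R => (qhiZ s R : ℝ))
        (fun t => (CZ t : ℝ)) (fun t s => (xZ t s : ℝ)) ∧
      ∑ t, ∑ s ∈ univ.erase phi, ((xZ t s : ℝ)) = OPT) := by
  classical
  -- Part 2: an integral optimal solution of LP1
  obtain ⟨xZ₂, hfeas₂, hval₂⟩ : ∃ xZ : T → M → ℤ,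
      LP1Feas Z (fun s R => (qloZ s R : ℝ)) (fun s R => (qhiZ s R : ℝ))
        (fun t => (CZ t : ℝ)) (fun t s => (xZ t s : ℝ)) ∧
      ∑ t, ∑ s ∈ univ.erase phi, ((xZ t s : ℝ)) = OPT := by
    obtain ⟨x0, hx0, hval⟩ := hOPT.1
    obtain ⟨xZ, hfeas, hmaxz⟩ := SD14.master Z qloZ qhiZ CZ hlam
      (fun _ s => if s = phi then 0 else 1) hx0
    refine ⟨xZ, hfeas, le_antisymm (hOPT.2 ⟨_, hfeas, rfl⟩) ?_⟩
    calc OPT = ∑ t, ∑ s ∈ univ.erase phi, x0 t s := hval.symm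
      _ = SD14.objv (fun _ s => if s = phi then 0 else 1) x0 := (SD14.objv_erase_eq phi x0).symm
      _ ≤ SD14.objv (fun _ s => if s = phi then 0 else 1)
            (fun t s => ((xZ t s : ℤ) : ℝ)) := hmaxz x0 hx0
      _ = ∑ t, ∑ s ∈ univ.erase phi, ((xZ t s : ℤ) : ℝ) := SD14.objv_erase_eq phi _
  refine ⟨?_, ⟨xZ₂, hfeas₂, hval₂⟩⟩
  intro yZ t0 s0
  rintro ⟨hpos1, hlt1⟩
  -- the shifted / augmented laminar data
  set OPTZ : ℤ := ∑ t, ∑ s ∈ univ.erase phi, xZ₂ t s with hOPTZ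
  have hOPTcast : (OPTZ : ℝ) = OPT := by
    rw [hOPTZ, ← hval₂]; push_cast; rfl
  set C' : T → ℤ := fun t => CZ t - ∑ s, yZ t s with hC'
  set K : ℤ := ∑ s ∈ univ.erase phi, ∑ t, yZ t s with hK
  set B : ℤ := (∑ t, C' t) + K - OPTZ with hB
  set Z' : M → Finset (Finset T) := fun s => if s = phi then {Finset.univ} else Z s with hZ'
  set qlo' : M → Finset T → ℤ :=
    fun s R => if s = phi then 0 else qloZ s R - ∑ t ∈ R, yZ t s with hqlo'
  set qhi' : M → Finset T → ℤ :=
    fun s R => if s = phi then B else qhiZ s R - ∑ t ∈ R, yZ t s with hqhi'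
  have hlam' : ∀ s, ∀ R ∈ Z' s, ∀ R' ∈ Z' s, R ⊆ R' ∨ R' ⊆ R ∨ Disjoint R R' := by
    intro s R hR R' hR'
    by_cases hs : s = phi
    · subst hs
      simp only [hZ', if_pos rfl, Finset.mem_singleton] at hR hR'
      left; rw [hR, hR']
    · simp only [hZ', if_neg hs] at hR hR'
      exact hlam s R hR R' hR'
  have hrow_of : ∀ x : T → M → ℝ,
      (∀ t, (∑ s, x t s) + ∑ s, ((yZ t s : ℤ) : ℝ) = ((CZ t : ℤ) : ℝ)) →
      ∀ t, ∑ s, x t s = ((C' t : ℤ) : ℝ) := by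
    intro x hx t
    have := hx t
    simp only [hC']
    push_cast
    linarith
  have hrow_to : ∀ x : T → M → ℝ,
      (∀ t, ∑ s, x t s = ((C' t : ℤ) : ℝ)) →
      ∀ t, (∑ s, x t s) + ∑ s, ((yZ t s : ℤ) : ℝ) = ((CZ t : ℤ) : ℝ) := by
    intro x hx t
    have := hx t
    simp only [hC'] at this
    push_cast at this
    linarith
  have hobjrel : ∀ x : T → M → ℝ, (∀ t, ∑ s, x t s = ((C' t : ℤ) : ℝ)) →
      (∑ t, ∑ s ∈ univ.erase phi, x t s) = (∑ t, ((C' t : ℤ) : ℝ)) - ∑ t, x t phi := by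
    intro x hx
    rw [← Finset.sum_sub_distrib]
    refine Finset.sum_congr rfl (fun t _ => ?_)
    rw [← hx t]
    exact Finset.sum_erase_eq_sub (Finset.mem_univ phi)
  have hKcast : (K : ℝ) = ∑ s ∈ univ.erase phi, ∑ t, ((yZ t s : ℤ) : ℝ) := by
    rw [hK]; push_cast; rfl
  have hBcast : (B : ℝ) = (∑ t, ((C' t : ℤ) : ℝ)) + (K : ℝ) - OPT := by
    rw [hB]; push_cast [hOPTcast]; ring
  have hquniv : ((qhi' phi Finset.univ : ℤ) : ℝ) = (B : ℝ) := by
    simp [hqhi']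
  have hqhine : ∀ s R, s ≠ phi →
      ((qhi' s R : ℤ) : ℝ) = ((qhiZ s R : ℤ) : ℝ) - ∑ t ∈ R, ((yZ t s : ℤ) : ℝ) := by
    intro s R hs
    simp only [hqhi', if_neg hs]
    push_cast
    ring
  have hqlone : ∀ s R, s ≠ phi →
      ((qlo' s R : ℤ) : ℝ) = ((qloZ s R : ℤ) : ℝ) - ∑ t ∈ R, ((yZ t s : ℤ) : ℝ) := by
    intro s R hs
    simp only [hqlo', if_neg hs]
    push_cast
    ring
  have hiff : ∀ x : T → M → ℝ,
      LP2Feas phi Z (fun s R => (qloZ s R : ℝ)) (fun s R => (qhiZ s R : ℝ))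
        (fun t => (CZ t : ℝ)) OPT (fun t s => (yZ t s : ℝ)) (fun _ _ => 0) x ↔
      SD14.LP1Feas' Z' (fun s R => (qlo' s R : ℝ)) (fun s R => (qhi' s R : ℝ))
        (fun t => (C' t : ℝ)) x := by
    intro x
    constructor
    · rintro ⟨h1, h2, h3, h4, h5⟩
      beta_reduce at h2 h3 h4 h5
      have hrow' : ∀ t, ∑ s, x t s = ((C' t : ℤ) : ℝ) := hrow_of x h5
      refine ⟨h1, ?_, ?_, hrow'⟩
      · intro s R hR
        beta_reduce
        by_cases hs : s = phi
        · have hRuniv : R = Finset.univ := by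
            rw [hs] at hR
            simpa [hZ'] using hR
          subst hRuniv
          rw [hs, hquniv, hBcast]
          rw [hobjrel x hrow', ← hKcast] at h2
          linarith
        · have hR' : R ∈ Z s := by simpa [hZ', if_neg hs] using hR
          have h := h3 s R hR'
          beta_reduce at h
          simp only [Finset.sum_const_zero, add_zero] at h
          rw [hqhine s R hs]
          linarith
      · intro s R hR
        beta_reduce
        by_cases hs : s = phi
        · have hRuniv : R = Finset.univ := by
            rw [hs] at hR
            simpa [hZ'] using hR
          subst hRuniv
          have h0 : ((qlo' phi Finset.univ : ℤ) : ℝ) = 0 := by simp [hqlo']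
          rw [hs, h0]
          exact Finset.sum_nonneg (fun t _ => h1 t phi)
        · have hR' : R ∈ Z s := by simpa [hZ', if_neg hs] using hR
          have h := h4 s R hR'
          beta_reduce at h
          simp only [Finset.sum_const_zero, add_zero] at h
          rw [hqlone s R hs]
          linarith
    · rintro ⟨h1, h2, h3, h4⟩
      beta_reduce at h2 h3 h4
      refine ⟨h1, ?_, ?_, ?_, hrow_to x h4⟩
      · have hmem : Finset.univ ∈ Z' phi := by simp [hZ']
        have hBle := h2 phi Finset.univ hmem
        beta_reduce at hBle
        rw [hquniv, hBcast] at hBle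
        rw [hobjrel x h4, ← hKcast]
        linarith
      · intro s R hR
        by_cases hs : s = phi
        · rw [hs, hZphi] at hR
          exact absurd hR (Finset.notMem_empty R)
        · have h := h2 s R (by simp [hZ', if_neg hs, hR])
          beta_reduce at h
          rw [hqhine s R hs] at h
          beta_reduce
          simp only [Finset.sum_const_zero, add_zero]
          linarith
      · intro s R hR
        by_cases hs : s = phi
        · rw [hs, hZphi] at hR
          exact absurd hR (Finset.notMem_empty R)
        · have h := h3 s R (by simp [hZ', if_neg hs, hR])
          beta_reduce at h
          rw [hqlone s R hs] at h
          beta_reduce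
          simp only [Finset.sum_const_zero, add_zero]
          linarith
  -- the LP2 feasible set is nonempty since the sup is positive
  obtain ⟨a1, x1, hx1, _⟩ : ∃ a : ℝ, ∃ x, LP2Feas phi Z (fun s R => (qloZ s R : ℝ))
      (fun s R => (qhiZ s R : ℝ)) (fun t => (CZ t : ℝ)) OPT
      (fun t s => (yZ t s : ℝ)) (fun _ _ => 0) x ∧ x t0 s0 = a := by
    by_contra h
    push_neg at h
    have hempty : {a : ℝ | ∃ x, LP2Feas phi Z (fun s R => (qloZ s R : ℝ))
        (fun s R => (qhiZ s R : ℝ)) (fun t => (CZ t : ℝ)) OPT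
        (fun t s => (yZ t s : ℝ)) (fun _ _ => 0) x ∧ x t0 s0 = a} = ∅ := by
      ext a
      simp only [Set.mem_setOf_eq, Set.mem_empty_iff_false, iff_false]
      rintro ⟨x, hx, hxa⟩
      exact h a x hx hxa
    rw [hempty, Real.sSup_empty] at hpos1
    exact lt_irrefl 0 hpos1
  have hx1' := (hiff x1).mp hx1
  obtain ⟨xZ', hfeas', hmax'⟩ := SD14.master Z' qlo' qhi' C' hlam'
    (fun t s => if t = t0 ∧ s = s0 then 1 else 0) hx1'
  have hvA : ((xZ' t0 s0 : ℤ) : ℝ) ∈ {a : ℝ | ∃ x, LP2Feas phi Z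
      (fun s R => (qloZ s R : ℝ)) (fun s R => (qhiZ s R : ℝ)) (fun t => (CZ t : ℝ)) OPT
      (fun t s => (yZ t s : ℝ)) (fun _ _ => 0) x ∧ x t0 s0 = a} :=
    ⟨(fun t s => ((xZ' t s : ℤ) : ℝ)), (hiff _).mpr hfeas', rfl⟩
  have hub : ∀ a ∈ {a : ℝ | ∃ x, LP2Feas phi Z
      (fun s R => (qloZ s R : ℝ)) (fun s R => (qhiZ s R : ℝ)) (fun t => (CZ t : ℝ)) OPT
      (fun t s => (yZ t s : ℝ)) (fun _ _ => 0) x ∧ x t0 s0 = a},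
      a ≤ ((xZ' t0 s0 : ℤ) : ℝ) := by
    rintro a ⟨x, hx, rfl⟩
    have h := hmax' x ((hiff x).mp hx)
    rwa [SD14.objv_pick_eq, SD14.objv_pick_eq] at h
  have hsup : sSup {a : ℝ | ∃ x, LP2Feas phi Z
      (fun s R => (qloZ s R : ℝ)) (fun s R => (qhiZ s R : ℝ)) (fun t => (CZ t : ℝ)) OPT
      (fun t s => (yZ t s : ℝ)) (fun _ _ => 0) x ∧ x t0 s0 = a}
      = ((xZ' t0 s0 : ℤ) : ℝ) := IsGreatest.csSup_eq ⟨hvA, hub⟩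
  rw [hsup] at hpos1 hlt1
  have h0 : 0 < xZ' t0 s0 := by exact_mod_cast hpos1
  have h1' : xZ' t0 s0 < 1 := by exact_mod_cast hlt1
  omega
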